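/- Let β ∈ ℝ with β ≠ 0, let h₀ : ℝ → ℝ be differentiable, and let y : ℝ × ℝ → ℝ be differentiable and satisfy x = y(x,t) + ((exp(β t) − 1)/β) · h₀(y(x,t)) for all (x,t), with 1 + ((exp(β t) − 1)/β) · h₀'(y(x,t)) ≠ 0 for all (x,t). Then q(x,t) := h₀(y(x,t)) · exp(β t) satisfies ∂q/∂t (x,t) + q(x,t) · ∂q/∂x (x,t) = β · q(x,t) for all (x,t), and q(x,0) = h₀(x) for all x. -/

import Mathlib

/-- Section 4: the Burgers equation with linear source term `β q` is solved by
`q(x,t) = h₀(y) e^{βt}` with `x = y + ((e^{βt} - 1)/β) h₀(y)`. -/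
theorem stmt_7 (β : ℝ) (hβ : β ≠ 0) (h₀ : ℝ → ℝ) (hh₀ : Differentiable ℝ h₀)
    (y : ℝ × ℝ → ℝ) (hy : Differentiable ℝ y)
    (hrel : ∀ x t : ℝ, x = y (x, t) + (Real.exp (β * t) - 1) / β * h₀ (y (x, t)))
    (hne : ∀ x t : ℝ, 1 + (Real.exp (β * t) - 1) / β * deriv h₀ (y (x, t)) ≠ 0) :
    (∀ x t : ℝ,
        deriv (fun τ => h₀ (y (x, τ)) * Real.exp (β * τ)) t
          + h₀ (y (x, t)) * Real.exp (β * t)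
            * deriv (fun ξ => h₀ (y (ξ, t)) * Real.exp (β * t)) x
          = β * (h₀ (y (x, t)) * Real.exp (β * t))) ∧
      ∀ x : ℝ, h₀ (y (x, 0)) * Real.exp (β * 0) = h₀ x := by
  constructor
  · intro x t
    -- abbreviations
    set a : ℝ := (Real.exp (β * t) - 1) / β with ha
    set e : ℝ := Real.exp (β * t) with he
    set Y : ℝ := y (x, t) with hY
    set d : ℝ := deriv h₀ Y with hd
    -- differentiability of slices
    have hyt : DifferentiableAt ℝ (fun τ => y (x, τ)) t :=
      (hy (x, t)).comp t (by fun_prop)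
    have hyx : DifferentiableAt ℝ (fun ξ => y (ξ, t)) x :=
      (hy (x, t)).comp x (by fun_prop)
    set yt : ℝ := deriv (fun τ => y (x, τ)) t with hytdef
    set yx : ℝ := deriv (fun ξ => y (ξ, t)) x with hyxdef
    have Hyt : HasDerivAt (fun τ => y (x, τ)) yt t := hyt.hasDerivAt
    have Hyx : HasDerivAt (fun ξ => y (ξ, t)) yx x := hyx.hasDerivAt
    have Hh0t : HasDerivAt (fun τ => h₀ (y (x, τ))) (d * yt) t :=
      (hh₀ Y).hasDerivAt.comp t Hyt
    have Hh0x : HasDerivAt (fun ξ => h₀ (y (ξ, t))) (d * yx) x :=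
      (hh₀ Y).hasDerivAt.comp x Hyx
    -- derivative of a(τ)
    have Hexp : HasDerivAt (fun τ : ℝ => Real.exp (β * τ)) (e * β) t := by
      have h1 : HasDerivAt (fun τ : ℝ => β * τ) β t := by
        simpa using (hasDerivAt_id t).const_mul β
      simpa [he] using h1.exp
    have Ha : HasDerivAt (fun τ : ℝ => (Real.exp (β * τ) - 1) / β) e t := by
      have := (Hexp.sub_const 1).div_const β
      simpa [mul_div_assoc, mul_div_cancel_right₀ _ hβ] using this
    -- differentiate the implicit relation in t
    have Hrelt : HasDerivAt (fun τ => y (x, τ)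
        + (Real.exp (β * τ) - 1) / β * h₀ (y (x, τ)))
        (yt + (e * h₀ Y + a * (d * yt))) t := Hyt.add (Ha.mul Hh0t)
    have Hconst : HasDerivAt (fun _ : ℝ => x) (0 : ℝ) t := hasDerivAt_const t x
    have Hrelt' : HasDerivAt (fun _ : ℝ => x)
        (yt + (e * h₀ Y + a * (d * yt))) t := by
      refine Hrelt.congr_of_eventuallyEq ?_
      filter_upwards with τ using hrel x τ
    have eqt : yt + (e * h₀ Y + a * (d * yt)) = 0 := Hrelt'.unique Hconst
    -- differentiate the implicit relation in x
    have Hrelx : HasDerivAt (fun ξ => y (ξ, t)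
        + (Real.exp (β * t) - 1) / β * h₀ (y (ξ, t)))
        (yx + a * (d * yx)) x := by
      exact Hyx.add (Hh0x.const_mul a)
    have Hid : HasDerivAt (fun ξ : ℝ => ξ) (1 : ℝ) x := hasDerivAt_id x
    have Hrelx' : HasDerivAt (fun ξ : ℝ => ξ) (yx + a * (d * yx)) x := by
      refine Hrelx.congr_of_eventuallyEq ?_
      filter_upwards with ξ using hrel ξ t
    have eqx : yx + a * (d * yx) = 1 := Hrelx'.unique Hid
    -- compute the derivatives in the statement
    have Hq_t : HasDerivAt (fun τ => h₀ (y (x, τ)) * Real.exp (β * τ))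
        (d * yt * e + h₀ Y * (e * β)) t := Hh0t.mul Hexp
    have Hq_x : HasDerivAt (fun ξ => h₀ (y (ξ, t)) * Real.exp (β * t))
        (d * yx * e) x := by
      simpa using Hh0x.mul_const e
    rw [Hq_t.deriv, Hq_x.deriv]
    -- algebra: yt + e * h₀ Y * yx = 0, since yt(1+a d) = -e h₀ Y, yx(1+a d) = 1
    have hne' : 1 + a * d ≠ 0 := hne x t
    have key : yt + e * h₀ Y * yx = 0 := by
      have h1 : yt * (1 + a * d) = -(e * h₀ Y) := by ring_nf; ring_nf at eqt; linarith
      have h2 : yx * (1 + a * d) = 1 := by ring_nf; ring_nf at eqx; linarith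
      have := mul_left_cancel₀ hne' (show (1 + a * d) * (yt + e * h₀ Y * yx)
          = (1 + a * d) * 0 by
        calc (1 + a * d) * (yt + e * h₀ Y * yx)
            = yt * (1 + a * d) + e * h₀ Y * (yx * (1 + a * d)) := by ring
          _ = -(e * h₀ Y) + e * h₀ Y * 1 := by rw [h1, h2]
          _ = (1 + a * d) * 0 := by ring)
      exact this
    linear_combination d * e * key
  · intro x
    have h := hrel x 0
    simp at h ⊢
    rw [← h]
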